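/- Let f : ℝ → ℂ be a positive definite function, and suppose that f is of class C^{2k} on some open neighborhood of the origin. Then f is of class C^{2k} on all of ℝ. -/

import Mathlib

open Complex MeasureTheory Filter Set Topology
open scoped Real BigOperators ComplexOrder

noncomputable section

/-- `f : ℝ → ℂ` is positive definite. -/
def IsPosDefFun (f : ℝ → ℂ) : Prop :=
  ∀ (n : ℕ) (x : Fin n → ℝ) (ξ : Fin n → ℂ),
    0 ≤ ∑ k, ∑ l, f (x k - x l) * ξ k * (starRingEnd ℂ) (ξ l)

/-- `f` is positive definite on `S ⊆ ℂ`. -/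
def IsPosDefOnC (f : ℂ → ℂ) (S : Set ℂ) : Prop :=
  ∀ (n : ℕ) (z : Fin n → ℂ), (∀ k l, z k - (starRingEnd ℂ) (z l) ∈ S) →
    ∀ ξ : Fin n → ℂ,
      0 ≤ ∑ k, ∑ l, f (z k - (starRingEnd ℂ) (z l)) * ξ k * (starRingEnd ℂ) (ξ l)

/-- `f` is co-positive definite on `T ⊆ ℂ`. -/
def IsCoPosDefOnC (f : ℂ → ℂ) (T : Set ℂ) : Prop :=
  ∀ (n : ℕ) (z : Fin n → ℂ), (∀ k l, z k + (starRingEnd ℂ) (z l) ∈ T) →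
    ∀ ξ : Fin n → ℂ,
      0 ≤ ∑ k, ∑ l, f (z k + (starRingEnd ℂ) (z l)) * ξ k * (starRingEnd ℂ) (ξ l)

/-- `G : ℝ → ℂ` is co-positive definite on `I ⊆ ℝ`. -/
def IsCoPosDefOnR (G : ℝ → ℂ) (I : Set ℝ) : Prop :=
  ∀ (n : ℕ) (x : Fin n → ℝ), (∀ k l, x k + x l ∈ I) →
    ∀ ξ : Fin n → ℂ,
      0 ≤ ∑ k, ∑ l, G (x k + x l) * ξ k * (starRingEnd ℂ) (ξ l)

/-- Horizontal strip `S_{a,b}`. -/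
def HStrip (a b : EReal) : Set ℂ := {z | a < (z.im : EReal) ∧ (z.im : EReal) < b}

/-- Vertical strip `T_{a,b}`. -/
def VStrip (a b : EReal) : Set ℂ := {z | a < (z.re : EReal) ∧ (z.re : EReal) < b}

/-- `μ` is exponentially finite with respect to the interval `(a,b)`. -/
def ExpFinite (μ : Measure ℝ) (a b : EReal) : Prop :=
  ∀ y : ℝ, a < (y : EReal) → (y : EReal) < b →
    Integrable (fun t : ℝ => Real.exp (-y * t)) μ

set_option maxHeartbeats 1000000


namespace PDW


variable (f : ℝ → ℂ)

/-- the sesquilinear form on finitely supported functions -/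
def B (ξ η : ℝ →₀ ℂ) : ℂ :=
  ∑ x ∈ ξ.support, ∑ y ∈ η.support, f (x - y) * ξ x * (starRingEnd ℂ) (η y)

lemma B_eq (ξ η : ℝ →₀ ℂ) {S T : Finset ℝ} (hS : ξ.support ⊆ S) (hT : η.support ⊆ T) :
    B f ξ η = ∑ x ∈ S, ∑ y ∈ T, f (x - y) * ξ x * (starRingEnd ℂ) (η y) := by
  unfold B
  rw [Finset.sum_subset hS]
  · apply Finset.sum_congr rfl
    intro x _
    apply Finset.sum_subset hT
    intro y _ hy
    rw [Finsupp.notMem_support_iff.1 hy]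
    simp
  · intro x _ hx
    rw [Finsupp.notMem_support_iff.1 hx]
    simp

lemma B_add_left (ξ₁ ξ₂ η : ℝ →₀ ℂ) :
    B f (ξ₁ + ξ₂) η = B f ξ₁ η + B f ξ₂ η := by
  rw [B_eq f (ξ₁ + ξ₂) η (S := ξ₁.support ∪ ξ₂.support) (T := η.support)
      (Finsupp.support_add) subset_rfl,
    B_eq f ξ₁ η (S := ξ₁.support ∪ ξ₂.support) (T := η.support)
      Finset.subset_union_left subset_rfl,
    B_eq f ξ₂ η (S := ξ₁.support ∪ ξ₂.support) (T := η.support)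
      Finset.subset_union_right subset_rfl, ← Finset.sum_add_distrib]
  apply Finset.sum_congr rfl
  intro x _
  rw [← Finset.sum_add_distrib]
  apply Finset.sum_congr rfl
  intro y _
  simp [Finsupp.add_apply]
  ring

lemma B_add_right (ξ η₁ η₂ : ℝ →₀ ℂ) :
    B f ξ (η₁ + η₂) = B f ξ η₁ + B f ξ η₂ := by
  rw [B_eq f ξ (η₁ + η₂) (S := ξ.support) (T := η₁.support ∪ η₂.support)
      subset_rfl Finsupp.support_add,
    B_eq f ξ η₁ (S := ξ.support) (T := η₁.support ∪ η₂.support)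
      subset_rfl Finset.subset_union_left,
    B_eq f ξ η₂ (S := ξ.support) (T := η₁.support ∪ η₂.support)
      subset_rfl Finset.subset_union_right, ← Finset.sum_add_distrib]
  apply Finset.sum_congr rfl
  intro x _
  rw [← Finset.sum_add_distrib]
  apply Finset.sum_congr rfl
  intro y _
  simp [Finsupp.add_apply]
  ring

lemma B_smul_left (c : ℂ) (ξ η : ℝ →₀ ℂ) :
    B f (c • ξ) η = c * B f ξ η := by
  rw [B_eq f (c • ξ) η (S := ξ.support) (T := η.support) Finsupp.support_smul subset_rfl]
  unfold B
  rw [Finset.mul_sum]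
  apply Finset.sum_congr rfl
  intro x _
  rw [Finset.mul_sum]
  apply Finset.sum_congr rfl
  intro y _
  simp [Finsupp.smul_apply]
  ring

lemma B_smul_right (c : ℂ) (ξ η : ℝ →₀ ℂ) :
    B f ξ (c • η) = (starRingEnd ℂ) c * B f ξ η := by
  rw [B_eq f ξ (c • η) (S := ξ.support) (T := η.support) subset_rfl Finsupp.support_smul]
  unfold B
  rw [Finset.mul_sum]
  apply Finset.sum_congr rfl
  intro x _
  rw [Finset.mul_sum]
  apply Finset.sum_congr rfl
  intro y _
  simp [Finsupp.smul_apply]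
  ring

lemma B_neg_left (ξ η : ℝ →₀ ℂ) : B f (-ξ) η = - B f ξ η := by
  have := B_smul_left f (-1) ξ η
  simpa using this

lemma B_neg_right (ξ η : ℝ →₀ ℂ) : B f ξ (-η) = - B f ξ η := by
  have := B_smul_right f (-1) ξ η
  simpa using this

lemma B_sub_left (ξ₁ ξ₂ η : ℝ →₀ ℂ) : B f (ξ₁ - ξ₂) η = B f ξ₁ η - B f ξ₂ η := by
  rw [sub_eq_add_neg, B_add_left, B_neg_left, sub_eq_add_neg]

lemma B_sub_right (ξ η₁ η₂ : ℝ →₀ ℂ) : B f ξ (η₁ - η₂) = B f ξ η₁ - B f ξ η₂ := by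
  rw [sub_eq_add_neg, B_add_right, B_neg_right, sub_eq_add_neg]

lemma B_single_single (u v : ℝ) (c d : ℂ) :
    B f (Finsupp.single u c) (Finsupp.single v d)
      = f (u - v) * c * (starRingEnd ℂ) d := by
  rw [B_eq f _ _ (S := {u}) (T := {v}) Finsupp.support_single_subset
      Finsupp.support_single_subset]
  simp





/-- scalar difference quotient -/
def Dq (t : ℝ) (g : ℝ → ℂ) (x : ℝ) : ℂ := (g (x + t) - g x) / t

/-- iterated scalar difference quotient -/
def iq : List ℝ → (ℝ → ℂ) → ℝ → ℂ
  | [], g => g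
  | t :: l, g => Dq t (iq l g)

lemma iq_cons (t : ℝ) (l : List ℝ) (g : ℝ → ℂ) : iq (t :: l) g = Dq t (iq l g) := rfl

lemma iq_continuous (L : List ℝ) (g : ℝ → ℂ) (hg : Continuous g) : Continuous (iq L g) := by
  induction L with
  | nil => exact hg
  | cons t l ih =>
    rw [iq_cons]
    unfold Dq
    exact ((ih.comp (continuous_id.add continuous_const)).sub ih).div_const _

lemma list_sum_abs_le (P : List ℝ) (δ : ℝ) (h : ∀ t ∈ P, |t| ≤ δ) :
    |P.sum| ≤ P.length * δ := by
  induction P with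
  | nil => simp
  | cons t l ih =>
    have h1 : |t| ≤ δ := h t (List.mem_cons_self)
    have h2 : |l.sum| ≤ l.length * δ := ih fun s hs => h s (List.mem_cons_of_mem t hs)
    calc |(t :: l).sum| = |t + l.sum| := by rw [List.sum_cons]
      _ ≤ |t| + |l.sum| := abs_add_le _ _
      _ ≤ δ + l.length * δ := add_le_add h1 h2
      _ = (t :: l).length * δ := by rw [List.length_cons]; push_cast; ring

/-- iterated difference quotients differentiate pointwise -/
lemma iq_hasDerivAt {r : ℝ} (g g' : ℝ → ℂ)
    (hg : ∀ y ∈ Metric.ball (0 : ℝ) r, HasDerivAt g (g' y) y)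
    (L : List ℝ) (x : ℝ)
    (hx : ∀ P : List ℝ, P.Sublist L → x + P.sum ∈ Metric.ball (0 : ℝ) r) :
    HasDerivAt (iq L g) (iq L g' x) x := by
  induction L generalizing x with
  | nil =>
    exact hg x (by simpa using hx [] (List.nil_sublist []))
  | cons t l ih =>
    rw [iq_cons, iq_cons]
    unfold Dq
    have h1 : HasDerivAt (iq l g) (iq l g' (x + t)) (x + t) := by
      apply ih (x + t)
      intro P hP
      have := hx (t :: P) (hP.cons₂ t)
      simpa [add_assoc] using this
    have h2 : HasDerivAt (iq l g) (iq l g' x) x := by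
      apply ih x
      intro P hP
      exact hx P (hP.trans (List.sublist_cons_self t l))
    have h3 : HasDerivAt (fun y => iq l g (y + t)) (iq l g' (x + t)) x :=
      HasDerivAt.comp_add_const x t h1
    exact (h3.sub h2).div_const t

/-- mean value bound for difference quotients -/
lemma mvq (G G' : ℝ → ℂ) (c : ℂ) (x t : ℝ) (ht : t ≠ 0) (ε : ℝ)
    (hd : ∀ y ∈ Set.uIcc x (x + t), HasDerivAt G (G' y) y)
    (hb : ∀ y ∈ Set.uIcc x (x + t), ‖G' y - c‖ ≤ ε) :
    ‖(G (x + t) - G x) / t - c‖ ≤ ε := by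
  set H : ℝ → ℂ := fun y => G y - c * y with hH
  have hd' : ∀ y ∈ Set.uIcc x (x + t), HasDerivWithinAt H (G' y - c) (Set.uIcc x (x + t)) y := by
    intro y hy
    have h0 : HasDerivAt (fun y : ℝ => (y : ℂ)) 1 y := by
      have := Complex.ofRealCLM.hasDerivAt (x := y); exact this
    have h1 : HasDerivAt (fun y : ℝ => c * (y : ℂ)) c y := by
      simpa using h0.const_mul c
    exact ((hd y hy).sub h1).hasDerivWithinAt
  have key := Convex.norm_image_sub_le_of_norm_hasDerivWithin_le hd' hb
    (convex_uIcc x (x + t)) (Set.left_mem_uIcc : x ∈ Set.uIcc x (x + t))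
    (Set.right_mem_uIcc : x + t ∈ Set.uIcc x (x + t))
  have e : H (x + t) - H x = (G (x + t) - G x) - c * t := by
    rw [hH]; push_cast; ring
  rw [e] at key
  have e2 : (G (x + t) - G x) / t - c = ((G (x + t) - G x) - c * t) / t := by
    field_simp
  have key2 : ‖G (x + t) - G x - c * (t : ℂ)‖ ≤ ε * |t| := by
    rw [show x + t - x = t from by ring, Real.norm_eq_abs] at key
    exact key
  rw [e2, norm_div]
  have ht' : ‖(t : ℂ)‖ = |t| := by rw [Complex.norm_real, Real.norm_eq_abs]
  rw [ht', div_le_iff₀ (abs_pos.2 ht)]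
  exact key2

/-- Main analytic lemma: iterated difference quotients of a `C^n` chain converge to the
top derivative at `0`. -/
lemma dq_main {r : ℝ} (hr : 0 < r) (n : ℕ) (d : ℕ → ℝ → ℂ)
    (hd : ∀ j < n, ∀ x ∈ Metric.ball (0 : ℝ) r, HasDerivAt (d j) (d (j + 1) x) x)
    (hc : ContinuousAt (d n) 0) (ε : ℝ) (hε : 0 < ε) :
    ∃ δ > 0, ∀ L : List ℝ, L.length = n → (∀ t ∈ L, t ≠ 0 ∧ |t| ≤ δ) →
      ∀ x : ℝ, |x| ≤ δ → ‖iq L (d 0) x - d n 0‖ ≤ ε := by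
  induction n generalizing d with
  | zero =>
    have := Metric.continuousAt_iff.1 hc ε hε
    obtain ⟨δ, hδ0, hδ⟩ := this
    refine ⟨δ / 2, by linarith, ?_⟩
    intro L hL _ x hx
    rw [List.length_eq_zero_iff.1 hL]
    show ‖d 0 x - d 0 0‖ ≤ ε
    by_cases hx0 : x = 0
    · rw [hx0]; simpa using le_of_lt hε
    · have : dist x 0 < δ := by
        rw [Real.dist_eq, sub_zero]; linarith
      have := hδ this
      rw [dist_eq_norm] at this
      linarith
  | succ n ih =>
    obtain ⟨δ₁, hδ₁0, hδ₁⟩ := ih (fun j => d (j + 1))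
      (fun j hj x hx => hd (j + 1) (by omega) x hx) hc
    set δ := min (δ₁ / 2) (r / (2 * n + 4)) with hδdef
    have hδ0 : 0 < δ := by
      apply lt_min (by linarith)
      positivity
    refine ⟨δ, hδ0, ?_⟩
    intro L hL hLt x hx
    obtain ⟨t, l, rfl⟩ : ∃ t l, L = t :: l := by
      cases L with
      | nil => simp at hL
      | cons a b => exact ⟨a, b, rfl⟩
    have hlen : l.length = n := by simpa using hL
    have ht0 : t ≠ 0 := (hLt t (List.mem_cons_self)).1
    have htδ : |t| ≤ δ := (hLt t (List.mem_cons_self)).2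
    have hlδ : ∀ s ∈ l, s ≠ 0 ∧ |s| ≤ δ := fun s hs => hLt s (List.mem_cons_of_mem t hs)
    -- points in the interval are ≤ 2δ in absolute value
    have hball : ∀ y ∈ Set.uIcc x (x + t), ∀ P : List ℝ, P.Sublist l →
        y + P.sum ∈ Metric.ball (0 : ℝ) r := by
      intro y hy P hP
      have hy' : |y| ≤ 2 * δ := by
        rw [Set.uIcc_eq_union] at hy
        have h1 : |x| ≤ δ := hx
        rcases Set.mem_union _ _ _ |>.1 hy with h | h
        · rw [Set.mem_Icc] at h
          rcases abs_le.1 h1 with ⟨ha, hb⟩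
          rcases abs_le.1 htδ with ⟨hc', hd'⟩
          rw [abs_le]; constructor <;> nlinarith
        · rw [Set.mem_Icc] at h
          rcases abs_le.1 h1 with ⟨ha, hb⟩
          rcases abs_le.1 htδ with ⟨hc', hd'⟩
          rw [abs_le]; constructor <;> nlinarith
      have hPsum : |P.sum| ≤ n * δ := by
        have h1 := list_sum_abs_le P δ (fun s hs => (hlδ s (hP.subset hs)).2)
        have h2 : (P.length : ℝ) ≤ n := by
          have := hP.length_le
          rw [hlen] at this
          exact_mod_cast this
        calc |P.sum| ≤ P.length * δ := h1
          _ ≤ n * δ := by nlinarith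
      have hδr : δ ≤ r / (2 * n + 4) := min_le_right _ _
      rw [Metric.mem_ball, Real.dist_eq, sub_zero]
      calc |y + P.sum| ≤ |y| + |P.sum| := abs_add_le _ _
        _ ≤ 2 * δ + n * δ := add_le_add hy' hPsum
        _ = (n + 2) * δ := by ring
        _ ≤ (n + 2) * (r / (2 * n + 4)) := by
            apply mul_le_mul_of_nonneg_left hδr (by positivity)
        _ < r := by
            have hn2 : (2 * (n : ℝ) + 4) ≠ 0 := by positivity
            have e : ((n : ℝ) + 2) * (r / (2 * n + 4)) = r / 2 := by
              field_simp
              ring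
            rw [e]
            linarith
    -- derivative of the inner quotient
    have hder : ∀ y ∈ Set.uIcc x (x + t),
        HasDerivAt (iq l (d 0)) (iq l (fun z => d 1 z) y) y := by
      intro y hy
      exact iq_hasDerivAt (d 0) (d 1) (fun z hz => hd 0 (by omega) z hz) l y
        (fun P hP => hball y hy P hP)
    -- the derivative values are close to d (n+1) 0
    have hclose : ∀ y ∈ Set.uIcc x (x + t), ‖iq l (fun z => d 1 z) y - d (n + 1) 0‖ ≤ ε := by
      intro y hy
      have hy' : |y| ≤ 2 * δ := by
        rw [Set.uIcc_eq_union] at hy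
        rcases abs_le.1 hx with ⟨ha, hb⟩
        rcases abs_le.1 htδ with ⟨hc', hd'⟩
        rcases Set.mem_union _ _ _ |>.1 hy with h | h <;> rw [Set.mem_Icc] at h <;>
          (rw [abs_le]; constructor <;> nlinarith)
      have hyδ₁ : |y| ≤ δ₁ := by
        have : 2 * δ ≤ δ₁ := by
          have := min_le_left (δ₁ / 2) (r / (2 * n + 4))
          rw [← hδdef] at this
          linarith
        linarith
      have := hδ₁ l hlen (fun s hs => ⟨(hlδ s hs).1,
        le_trans (hlδ s hs).2 (le_trans (min_le_left _ _) (by linarith))⟩) y hyδ₁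
      exact this
    -- conclude by mean value
    rw [iq_cons]
    unfold Dq
    exact mvq (iq l (d 0)) (iq l (d 1)) (d (n + 1) 0) x t ht0 ε hder hclose



/-- translation of a finitely supported function -/
def tau (a : ℝ) (ξ : ℝ →₀ ℂ) : ℝ →₀ ℂ := ξ.mapDomain (fun x => a + x)

lemma tau_inj (a : ℝ) : Function.Injective (fun x : ℝ => a + x) := fun _ _ h => by
  simpa using h

lemma tau_B (a : ℝ) (ξ η : ℝ →₀ ℂ) : B f (tau a ξ) (tau a η) = B f ξ η := by
  rw [B_eq f (tau a ξ) (tau a η)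
      (S := ξ.support.image (fun x => a + x))
      (T := η.support.image (fun x => a + x))
      (le_of_eq (Finsupp.mapDomain_support_of_injective (tau_inj a) ξ))
      (le_of_eq (Finsupp.mapDomain_support_of_injective (tau_inj a) η))]
  rw [Finset.sum_image (fun x _ y _ h => tau_inj a h)]
  unfold B
  apply Finset.sum_congr rfl
  intro x hx
  rw [Finset.sum_image (fun x _ y _ h => tau_inj a h)]
  apply Finset.sum_congr rfl
  intro y hy
  simp only [tau]
  rw [Finsupp.mapDomain_apply (tau_inj a), Finsupp.mapDomain_apply (tau_inj a)]
  congr 2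
  ring

lemma tau_tau (a b : ℝ) (ξ : ℝ →₀ ℂ) : tau a (tau b ξ) = tau (a + b) ξ := by
  unfold tau
  rw [← Finsupp.mapDomain_comp]
  congr 1
  funext x
  simp [add_assoc]

lemma tau_zero (ξ : ℝ →₀ ℂ) : tau 0 ξ = ξ := by
  unfold tau
  rw [show (fun x : ℝ => 0 + x) = id from funext fun x => zero_add x, Finsupp.mapDomain_id]

lemma tau_sub (a : ℝ) (ξ η : ℝ →₀ ℂ) : tau a (ξ - η) = tau a ξ - tau a η := by
  unfold tau
  rw [sub_eq_add_neg, sub_eq_add_neg, Finsupp.mapDomain_add]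
  congr 1
  rw [show -η = (-1 : ℂ) • η by simp, Finsupp.mapDomain_smul]
  simp

lemma tau_smul (a : ℝ) (c : ℂ) (ξ : ℝ →₀ ℂ) : tau a (c • ξ) = c • tau a ξ := by
  unfold tau; exact Finsupp.mapDomain_smul c ξ

lemma tau_single (a x : ℝ) (c : ℂ) :
    tau a (Finsupp.single x c) = Finsupp.single (a + x) c := Finsupp.mapDomain_single

lemma B_tau_right (t : ℝ) (ξ η : ℝ →₀ ℂ) : B f ξ (tau t η) = B f (tau (-t) ξ) η := by
  conv_rhs => rw [← tau_B f t (tau (-t) ξ) η, tau_tau, add_neg_cancel, tau_zero]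

/-- delta vector -/
def dlt (x : ℝ) : ℝ →₀ ℂ := Finsupp.single x 1

/-- difference quotient vector operator -/
def Dv (t : ℝ) (ξ : ℝ →₀ ℂ) : ℝ →₀ ℂ := ((t⁻¹ : ℝ) : ℂ) • (tau t ξ - ξ)

/-- iterated difference quotient vector -/
def wv : List ℝ → (ℝ →₀ ℂ)
  | [] => dlt 0
  | t :: l => Dv t (wv l)

lemma Dq_const_mul (t : ℝ) (c : ℂ) (g : ℝ → ℂ) (x : ℝ) :
    Dq t (fun y => c * g y) x = c * Dq t g x := by
  unfold Dq; rw [mul_div_assoc']; ring_nf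

lemma iq_const_mul (L : List ℝ) (c : ℂ) (g : ℝ → ℂ) (x : ℝ) :
    iq L (fun y => c * g y) x = c * iq L g x := by
  induction L generalizing x with
  | nil => rfl
  | cons t l ih =>
    rw [iq_cons, iq_cons, show iq l (fun y => c * g y) = fun y => c * iq l g y from
      funext fun y => ih y, Dq_const_mul]

lemma iq_append (L₁ L₂ : List ℝ) (g : ℝ → ℂ) : iq (L₁ ++ L₂) g = iq L₁ (iq L₂ g) := by
  induction L₁ with
  | nil => rfl
  | cons t l ih => rw [List.cons_append, iq_cons, iq_cons, ih]

lemma Phi_Dv_left (t : ℝ) (ξ η : ℝ →₀ ℂ) (x : ℝ) :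
    B f (tau x (Dv t ξ)) η = Dq t (fun y => B f (tau y ξ) η) x := by
  unfold Dv Dq
  rw [tau_smul, B_smul_left, tau_sub, B_sub_left, tau_tau]
  rw [div_eq_inv_mul]
  push_cast
  ring_nf

lemma Phi_Dv_right (t : ℝ) (ξ η : ℝ →₀ ℂ) (x : ℝ) :
    B f (tau x ξ) (Dv t η) = -(Dq (-t) (fun y => B f (tau y ξ) η) x) := by
  unfold Dv Dq
  rw [B_smul_right, B_sub_right, B_tau_right, tau_tau]
  rw [Complex.conj_ofReal]
  rw [div_eq_inv_mul]
  push_cast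
  ring_nf

lemma Phi_w_left (L : List ℝ) (η : ℝ →₀ ℂ) (x : ℝ) :
    B f (tau x (wv L)) η = iq L (fun y => B f (tau y (dlt 0)) η) x := by
  induction L generalizing x with
  | nil => rfl
  | cons t l ih =>
    show B f (tau x (Dv t (wv l))) η = _
    rw [Phi_Dv_left, iq_cons]
    congr 1
    funext y
    exact ih y

lemma Phi_dlt (x : ℝ) : B f (tau x (dlt 0)) (dlt 0) = f x := by
  unfold dlt
  rw [tau_single, B_single_single]
  simp

lemma Phi_w_right (S : List ℝ) (x : ℝ) :
    B f (tau x (dlt 0)) (wv S)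
      = ((-1 : ℂ) ^ S.length) * iq (S.map (fun t => -t)) f x := by
  induction S generalizing x with
  | nil => simpa [wv, iq] using Phi_dlt f x
  | cons t l ih =>
    show B f (tau x (dlt 0)) (Dv t (wv l)) = _
    rw [Phi_Dv_right]
    rw [show (fun y => B f (tau y (dlt 0)) (wv l))
        = fun y => ((-1 : ℂ) ^ l.length) * iq (l.map (fun t => -t)) f y from
      funext fun y => ih y]
    rw [Dq_const_mul]
    rw [List.map_cons, List.length_cons, iq_cons]
    ring

lemma B_w_w (L S : List ℝ) (x : ℝ) :
    B f (tau x (wv L)) (wv S)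
      = ((-1 : ℂ) ^ S.length) * iq L (iq (S.map (fun t => -t)) f) x := by
  rw [Phi_w_left]
  rw [show (fun y => B f (tau y (dlt 0)) (wv S))
      = fun y => ((-1 : ℂ) ^ S.length) * iq (S.map (fun t => -t)) f y from
    funext fun y => Phi_w_right f S y]
  rw [iq_const_mul]

lemma map_neg_neg (L : List ℝ) : (L.map (fun t => -t)).map (fun t => -t) = L := by
  rw [List.map_map]
  simp

lemma B_w_w' (L₁ L₂ : List ℝ) (x : ℝ) :
    B f (tau x (wv L₁)) (wv (L₂.map (fun t => -t)))
      = ((-1 : ℂ) ^ L₂.length) * iq (L₁ ++ L₂) f x := by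
  rw [B_w_w, map_neg_neg, List.length_map, iq_append]

variable {f : ℝ → ℂ}
variable (hpd : ∀ (n : ℕ) (x : Fin n → ℝ) (ξ : Fin n → ℂ),
    0 ≤ ∑ k, ∑ l, f (x k - x l) * ξ k * (starRingEnd ℂ) (ξ l))


include hpd

lemma f0_nonneg : 0 ≤ f 0 := by
  have h := hpd 1 ![0] ![1]
  simpa using h

lemma f_symm (a : ℝ) : f (-a) = (starRingEnd ℂ) (f a) := by
  have h0 : (f 0).im = 0 := ((Complex.le_def.1 (f0_nonneg hpd)).2).symm
  have h1 := hpd 2 ![0, a] ![1, 1]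
  have h2 := hpd 2 ![0, a] ![1, Complex.I]
  simp only [Fin.sum_univ_two, Matrix.cons_val_zero, Matrix.cons_val_one, Matrix.head_cons,
    sub_zero, zero_sub, sub_self, map_one, mul_one, one_mul] at h1 h2
  have e1 := (Complex.le_def.1 h1).2
  have e2 := (Complex.le_def.1 h2).2
  rw [Complex.conj_I] at e2
  simp only [Complex.add_im, Complex.mul_im, Complex.mul_re, Complex.I_re, Complex.I_im,
    Complex.neg_im, Complex.neg_re, Complex.zero_im, h0] at e1 e2
  rw [Complex.ext_iff]
  constructor
  · simp only [Complex.conj_re]; linarith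
  · simp only [Complex.conj_im]; linarith

lemma B_pos (ξ : ℝ →₀ ℂ) : 0 ≤ B f ξ ξ := by
  classical
  set s := ξ.support with hs
  set n := s.card with hn
  set e := s.equivFin with he
  have key : B f ξ ξ = ∑ k : Fin n, ∑ l : Fin n,
      f ((e.symm k : ℝ) - (e.symm l : ℝ)) * ξ (e.symm k) * (starRingEnd ℂ) (ξ (e.symm l)) := by
    unfold B
    rw [← Finset.sum_coe_sort s]
    rw [← Equiv.sum_comp e.symm]
    apply Finset.sum_congr rfl
    intro k _
    rw [← Finset.sum_coe_sort s]
    rw [← Equiv.sum_comp e.symm]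
  rw [key]
  exact hpd n (fun k => (e.symm k : ℝ)) (fun k => ξ (e.symm k))

omit hpd in
lemma B_conj (hsym : ∀ a, f (-a) = (starRingEnd ℂ) (f a)) (ξ η : ℝ →₀ ℂ) :
    B f η ξ = (starRingEnd ℂ) (B f ξ η) := by
  unfold B
  rw [map_sum]
  rw [Finset.sum_comm]
  apply Finset.sum_congr rfl
  intro y _
  rw [map_sum]
  apply Finset.sum_congr rfl
  intro x _
  rw [map_mul, map_mul, ← hsym (y - x), neg_sub, starRingEnd_self_apply]
  ring

lemma B_self_re_nonneg (ξ : ℝ →₀ ℂ) : 0 ≤ (B f ξ ξ).re :=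
  (Complex.le_def.1 (B_pos hpd ξ)).1

lemma B_cs (ξ η : ℝ →₀ ℂ) :
    ‖B f ξ η‖ ^ 2 ≤ (B f ξ ξ).re * (B f η η).re := by
  have hsym := f_symm hpd
  set u := B f ξ η with hu
  set p := (B f ξ ξ).re with hp
  set q := (B f η η).re with hq
  have hp0 : 0 ≤ p := B_self_re_nonneg hpd ξ
  have hq0 : 0 ≤ q := B_self_re_nonneg hpd η
  by_cases hu0 : u = 0
  · rw [hu0]
    simpa using mul_nonneg hp0 hq0
  set φ : ℂ := u / ‖u‖ with hφ
  have hconj : (starRingEnd ℂ) φ * u = (‖u‖ : ℂ) := by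
    rw [hφ, map_div₀, Complex.conj_ofReal, div_mul_eq_mul_div, mul_comm,
      Complex.mul_conj, Complex.normSq_eq_norm_sq, pow_two]
    push_cast
    rw [mul_div_assoc, div_self (Complex.ofReal_ne_zero.2 (norm_ne_zero_iff.2 hu0)), mul_one]
  have hconj' : φ * (starRingEnd ℂ) u = (‖u‖ : ℂ) := by
    have := congrArg (starRingEnd ℂ) hconj
    rw [map_mul, starRingEnd_self_apply, Complex.conj_ofReal] at this
    linear_combination this
  have hφsq : Complex.normSq φ ≤ 1 := by
    rw [hφ, Complex.normSq_div]
    have : Complex.normSq (‖u‖ : ℂ) = Complex.normSq u := by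
      rw [Complex.normSq_ofReal, ← Complex.sq_norm, pow_two]
    rw [this, div_self (by simpa [Complex.normSq_eq_zero] using hu0)]
  have hBηξ : B f η ξ = (starRingEnd ℂ) u := B_conj hsym ξ η
  have quad : ∀ s : ℝ, 0 ≤ (Complex.normSq φ * q) * (s * s) + (2 * ‖u‖) * s + p := by
    intro s
    have hpos := B_self_re_nonneg hpd (ξ + (s : ℂ) • (φ • η))
    have expand : B f (ξ + (s : ℂ) • (φ • η)) (ξ + (s : ℂ) • (φ • η))
        = B f ξ ξ + ((2 * s * ‖u‖ : ℝ) : ℂ)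
          + ((s * s * Complex.normSq φ : ℝ) : ℂ) * B f η η := by
      simp only [B_add_left, B_add_right, B_smul_left, B_smul_right, map_mul,
        Complex.conj_ofReal, hBηξ]
      have hns : ((Complex.normSq φ : ℝ) : ℂ) = φ * (starRingEnd ℂ) φ := (Complex.mul_conj φ).symm
      have e1 : (starRingEnd ℂ) φ * (B f ξ η) = (‖u‖ : ℂ) := by rw [← hu]; exact hconj
      have e2 : φ * (starRingEnd ℂ) u = (‖u‖ : ℂ) := hconj'
      push_cast
      linear_combination (s : ℂ) * e2 + (s : ℂ) * e1
        - (s : ℂ) * (s : ℂ) * (B f η η) * hns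
    rw [expand] at hpos
    simp only [Complex.add_re, Complex.re_ofReal_mul, Complex.ofReal_re] at hpos
    rw [← hp] at hpos
    nlinarith [hpos]
  have hd := discrim_le_zero quad
  rw [discrim] at hd
  have h1 : ‖u‖ ^ 2 ≤ p * (Complex.normSq φ * q) := by nlinarith
  have h2 : p * (Complex.normSq φ * q) ≤ p * q := by
    nlinarith [mul_nonneg (mul_nonneg hp0 hq0) (sub_nonneg.2 hφsq)]
  linarith

/-- seminorm -/
def Nrm (f : ℝ → ℂ) (ξ : ℝ →₀ ℂ) : ℝ := Real.sqrt (B f ξ ξ).re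

omit hpd in
lemma Nrm_nonneg (ξ : ℝ →₀ ℂ) : 0 ≤ Nrm f ξ := Real.sqrt_nonneg _

lemma Nrm_sq (ξ : ℝ →₀ ℂ) : Nrm f ξ ^ 2 = (B f ξ ξ).re :=
  Real.sq_sqrt (B_self_re_nonneg hpd ξ)

lemma norm_B_le (ξ η : ℝ →₀ ℂ) : ‖B f ξ η‖ ≤ Nrm f ξ * Nrm f η := by
  have h := B_cs hpd ξ η
  have h2 : ‖B f ξ η‖ ^ 2 ≤ (Nrm f ξ * Nrm f η) ^ 2 := by
    rw [mul_pow, Nrm_sq hpd, Nrm_sq hpd]; exact h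
  calc ‖B f ξ η‖ = Real.sqrt (‖B f ξ η‖ ^ 2) := (Real.sqrt_sq (norm_nonneg _)).symm
    _ ≤ Real.sqrt ((Nrm f ξ * Nrm f η) ^ 2) := Real.sqrt_le_sqrt h2
    _ = Nrm f ξ * Nrm f η := Real.sqrt_sq (mul_nonneg (Nrm_nonneg _) (Nrm_nonneg _))

omit hpd in
lemma Nrm_le_of (ξ : ℝ →₀ ℂ) (c : ℝ) (h : (B f ξ ξ).re ≤ c) : Nrm f ξ ≤ Real.sqrt c :=
  Real.sqrt_le_sqrt h


omit hpd in
lemma chain_exists {k : ℕ} {U : Set ℝ} (hU : IsOpen U) (h0 : (0 : ℝ) ∈ U)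
    (hf : ContDiffOn ℝ (2 * k : ℕ) f U) :
    ∃ r > 0, ∃ d : ℕ → ℝ → ℂ, d 0 = f ∧
      (∀ j < 2 * k, ∀ x ∈ Metric.ball (0 : ℝ) r, HasDerivAt (d j) (d (j + 1) x) x) ∧
      (∀ j ≤ 2 * k, ContinuousAt (d j) 0) := by
  obtain ⟨r, hr, hball⟩ := Metric.isOpen_iff.1 hU 0 h0
  refine ⟨r, hr, fun j => iteratedDerivWithin j f U, ?_, ?_, ?_⟩
  · exact iteratedDerivWithin_zero
  · intro j hj x hx
    have hxU : x ∈ U := hball hx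
    have hdiff : DifferentiableOn ℝ (iteratedDerivWithin j f U) U :=
      hf.differentiableOn_iteratedDerivWithin (by exact_mod_cast hj) hU.uniqueDiffOn
    have hw : HasDerivWithinAt (iteratedDerivWithin j f U)
        (derivWithin (iteratedDerivWithin j f U) U x) U x :=
      (hdiff x hxU).hasDerivWithinAt
    rw [← iteratedDerivWithin_succ] at hw
    exact hw.hasDerivAt (hU.mem_nhds hxU)
  · intro j hj
    have hcont : ContinuousOn (iteratedDerivWithin j f U) U :=
      hf.continuousOn_iteratedDerivWithin (by exact_mod_cast hj) hU.uniqueDiffOn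
    exact (hcont.continuousWithinAt h0).continuousAt (hU.mem_nhds h0)

omit hpd in
lemma Nrm_tau (x : ℝ) (ξ : ℝ →₀ ℂ) : Nrm f (tau x ξ) = Nrm f ξ := by
  unfold Nrm
  rw [tau_B]

omit hpd in
lemma neg_entries {δ : ℝ} {Q : List ℝ} (hQ : ∀ t ∈ Q, t ≠ 0 ∧ |t| ≤ δ) :
    ∀ t ∈ Q.map (fun t => -t), t ≠ 0 ∧ |t| ≤ δ := by
  intro t ht
  obtain ⟨s, hs, rfl⟩ := List.mem_map.1 ht
  refine ⟨neg_ne_zero.2 (hQ s hs).1, ?_⟩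
  rw [abs_neg]
  exact (hQ s hs).2

lemma cau {k : ℕ} {U : Set ℝ} (hU : IsOpen U) (h0 : (0 : ℝ) ∈ U)
    (hf : ContDiffOn ℝ (2 * k : ℕ) f U) {m : ℕ} (hm : m ≤ 2 * k)
    (ε : ℝ) (hε : 0 < ε) :
    ∃ δ > 0, ∀ L L' : List ℝ, L.length = m → L'.length = m →
      (∀ t ∈ L, t ≠ 0 ∧ |t| ≤ δ) → (∀ t ∈ L', t ≠ 0 ∧ |t| ≤ δ) →
      ∀ x : ℝ, ‖iq L f x - iq L' f x‖ ≤ ε := by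
  obtain ⟨r, hr, d, hd0, hder, hcont⟩ := chain_exists hU h0 hf
  set a := min m k with ha_def
  set b := m - a with hb_def
  have hab : a + b = m := by omega
  have ha2 : 2 * a ≤ 2 * k := by omega
  have hb2 : 2 * b ≤ 2 * k := by omega
  set Ma := Real.sqrt (‖d (2 * a) 0‖ + 1) with hMa_def
  set Mb := Real.sqrt (‖d (2 * b) 0‖ + 1) with hMb_def
  have hMa0 : 0 ≤ Ma := Real.sqrt_nonneg _
  have hMb0 : 0 ≤ Mb := Real.sqrt_nonneg _
  set eps1 := min 1 ((ε / (2 * (Ma + Mb + 1))) ^ 2) with heps1_def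
  have heps10 : 0 < eps1 := lt_min one_pos (by positivity)
  have heps11 : eps1 ≤ 1 := min_le_left _ _
  obtain ⟨da, hda0, hda⟩ := dq_main hr (2 * a) d
    (fun j hj => hder j (by omega)) (hcont _ ha2) eps1 heps10
  obtain ⟨db, hdb0, hdb⟩ := dq_main hr (2 * b) d
    (fun j hj => hder j (by omega)) (hcont _ hb2) eps1 heps10
  set δ := min da db with hdelta_def
  have hδ0 : 0 < δ := lt_min hda0 hdb0
  refine ⟨δ, hδ0, ?_⟩
  intro L L' hL hL' hLe hL'e x
  have keyA : ∀ P Q : List ℝ, P.length = a → Q.length = a →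
      (∀ t ∈ P, t ≠ 0 ∧ |t| ≤ δ) → (∀ t ∈ Q, t ≠ 0 ∧ |t| ≤ δ) →
      ∃ E : ℂ, B f (wv P) (wv Q) = ((-1 : ℂ) ^ a) * (d (2 * a) 0 + E) ∧ ‖E‖ ≤ eps1 := by
    intro P Q hP hQ hPe hQe
    have hrepr : B f (wv P) (wv Q) = ((-1 : ℂ) ^ a) * iq (P ++ Q.map (fun t => -t)) f 0 := by
      have h := B_w_w' f P (Q.map (fun t => -t)) 0
      rw [map_neg_neg, tau_zero, List.length_map, hQ] at h
      exact h
    refine ⟨iq (P ++ Q.map (fun t => -t)) f 0 - d (2 * a) 0, by rw [hrepr]; ring, ?_⟩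
    rw [← hd0]
    apply hda _ (by rw [List.length_append, List.length_map]; omega)
    · intro t ht
      rcases List.mem_append.1 ht with h | h
      · exact ⟨(hPe t h).1, le_trans (hPe t h).2 (min_le_left _ _)⟩
      · have h2 := neg_entries hQe t h
        exact ⟨h2.1, le_trans h2.2 (min_le_left _ _)⟩
    · simpa using le_of_lt hda0
  have keyB : ∀ P Q : List ℝ, P.length = b → Q.length = b →
      (∀ t ∈ P, t ≠ 0 ∧ |t| ≤ δ) → (∀ t ∈ Q, t ≠ 0 ∧ |t| ≤ δ) →
      ∃ E : ℂ, B f (wv P) (wv Q) = ((-1 : ℂ) ^ b) * (d (2 * b) 0 + E) ∧ ‖E‖ ≤ eps1 := by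
    intro P Q hP hQ hPe hQe
    have hrepr : B f (wv P) (wv Q) = ((-1 : ℂ) ^ b) * iq (P ++ Q.map (fun t => -t)) f 0 := by
      have h := B_w_w' f P (Q.map (fun t => -t)) 0
      rw [map_neg_neg, tau_zero, List.length_map, hQ] at h
      exact h
    refine ⟨iq (P ++ Q.map (fun t => -t)) f 0 - d (2 * b) 0, by rw [hrepr]; ring, ?_⟩
    rw [← hd0]
    apply hdb _ (by rw [List.length_append, List.length_map]; omega)
    · intro t ht
      rcases List.mem_append.1 ht with h | h
      · exact ⟨(hPe t h).1, le_trans (hPe t h).2 (min_le_right _ _)⟩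
      · have h2 := neg_entries hQe t h
        exact ⟨h2.1, le_trans h2.2 (min_le_right _ _)⟩
    · simpa using le_of_lt hdb0
  set L1 := L.take a with hL1_def
  set L2 := L.drop a with hL2_def
  set L1' := L'.take a with hL1'_def
  set L2' := L'.drop a with hL2'_def
  have hL1 : L1.length = a := by rw [hL1_def, List.length_take]; omega
  have hL2 : L2.length = b := by rw [hL2_def, List.length_drop]; omega
  have hL1' : L1'.length = a := by rw [hL1'_def, List.length_take]; omega
  have hL2' : L2'.length = b := by rw [hL2'_def, List.length_drop]; omega
  have hL1e : ∀ t ∈ L1, t ≠ 0 ∧ |t| ≤ δ := fun t ht => hLe t ((List.take_sublist a L).subset ht)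
  have hL2e : ∀ t ∈ L2, t ≠ 0 ∧ |t| ≤ δ := fun t ht => hLe t ((List.drop_sublist a L).subset ht)
  have hL1'e : ∀ t ∈ L1', t ≠ 0 ∧ |t| ≤ δ :=
    fun t ht => hL'e t ((List.take_sublist a L').subset ht)
  have hL2'e : ∀ t ∈ L2', t ≠ 0 ∧ |t| ≤ δ :=
    fun t ht => hL'e t ((List.drop_sublist a L').subset ht)
  set p := wv L1 with hp_def
  set p' := wv L1' with hp'_def
  set q := wv (L2.map (fun t => -t)) with hq_def
  set q' := wv (L2'.map (fun t => -t)) with hq'_def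
  have hsq : ((-1 : ℂ) ^ b) * ((-1 : ℂ) ^ b) = 1 := by
    rw [← pow_add, ← two_mul, pow_mul]
    simp
  have hiq : iq L f x = ((-1 : ℂ) ^ b) * B f (tau x p) q := by
    have h := B_w_w' f L1 L2 x
    rw [List.take_append_drop a L, hL2] at h
    rw [hp_def, hq_def, h, ← mul_assoc, hsq, one_mul]
  have hiq' : iq L' f x = ((-1 : ℂ) ^ b) * B f (tau x p') q' := by
    have h := B_w_w' f L1' L2' x
    rw [List.take_append_drop a L', hL2'] at h
    rw [hp'_def, hq'_def, h, ← mul_assoc, hsq, one_mul]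
  have sqrt4 : Real.sqrt (4 * eps1) = 2 * Real.sqrt eps1 := by
    rw [show (4 : ℝ) * eps1 = 2 ^ 2 * eps1 by norm_num, Real.sqrt_mul (by positivity),
      Real.sqrt_sq (by norm_num : (0 : ℝ) ≤ 2)]
  have hdiffA : Nrm f (p - p') ≤ 2 * Real.sqrt eps1 := by
    obtain ⟨E1, hE1, hE1n⟩ := keyA L1 L1 hL1 hL1 hL1e hL1e
    obtain ⟨E2, hE2, hE2n⟩ := keyA L1 L1' hL1 hL1' hL1e hL1'e
    obtain ⟨E3, hE3, hE3n⟩ := keyA L1' L1 hL1' hL1 hL1'e hL1e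
    obtain ⟨E4, hE4, hE4n⟩ := keyA L1' L1' hL1' hL1' hL1'e hL1'e
    have expand : B f (p - p') (p - p') = ((-1 : ℂ) ^ a) * (E1 - E2 - E3 + E4) := by
      rw [B_sub_left, B_sub_right, B_sub_right, hp_def, hp'_def, hE1, hE2, hE3, hE4]
      ring
    have hre : (B f (p - p') (p - p')).re ≤ 4 * eps1 := by
      calc (B f (p - p') (p - p')).re ≤ ‖B f (p - p') (p - p')‖ := Complex.re_le_norm _
        _ = ‖E1 - E2 - E3 + E4‖ := by
            rw [expand, norm_mul, norm_pow, norm_neg, norm_one, one_pow, one_mul]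
        _ ≤ ‖E1‖ + ‖E2‖ + ‖E3‖ + ‖E4‖ := by
            calc ‖E1 - E2 - E3 + E4‖ ≤ ‖E1 - E2 - E3‖ + ‖E4‖ := norm_add_le _ _
              _ ≤ ‖E1 - E2‖ + ‖E3‖ + ‖E4‖ := by
                  have h := norm_sub_le (E1 - E2) E3
                  linarith
              _ ≤ ‖E1‖ + ‖E2‖ + ‖E3‖ + ‖E4‖ := by
                  have h := norm_sub_le E1 E2
                  linarith
        _ ≤ 4 * eps1 := by linarith
    calc Nrm f (p - p') ≤ Real.sqrt (4 * eps1) := Nrm_le_of _ _ hre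
      _ = 2 * Real.sqrt eps1 := sqrt4
  have hdiffB : Nrm f (q - q') ≤ 2 * Real.sqrt eps1 := by
    obtain ⟨E1, hE1, hE1n⟩ := keyB (L2.map (fun t => -t)) (L2.map (fun t => -t))
      (by rw [List.length_map]; exact hL2) (by rw [List.length_map]; exact hL2)
      (neg_entries hL2e) (neg_entries hL2e)
    obtain ⟨E2, hE2, hE2n⟩ := keyB (L2.map (fun t => -t)) (L2'.map (fun t => -t))
      (by rw [List.length_map]; exact hL2) (by rw [List.length_map]; exact hL2')
      (neg_entries hL2e) (neg_entries hL2'e)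
    obtain ⟨E3, hE3, hE3n⟩ := keyB (L2'.map (fun t => -t)) (L2.map (fun t => -t))
      (by rw [List.length_map]; exact hL2') (by rw [List.length_map]; exact hL2)
      (neg_entries hL2'e) (neg_entries hL2e)
    obtain ⟨E4, hE4, hE4n⟩ := keyB (L2'.map (fun t => -t)) (L2'.map (fun t => -t))
      (by rw [List.length_map]; exact hL2') (by rw [List.length_map]; exact hL2')
      (neg_entries hL2'e) (neg_entries hL2'e)
    have expand : B f (q - q') (q - q') = ((-1 : ℂ) ^ b) * (E1 - E2 - E3 + E4) := by
      rw [B_sub_left, B_sub_right, B_sub_right, hq_def, hq'_def, hE1, hE2, hE3, hE4]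
      ring
    have hre : (B f (q - q') (q - q')).re ≤ 4 * eps1 := by
      calc (B f (q - q') (q - q')).re ≤ ‖B f (q - q') (q - q')‖ := Complex.re_le_norm _
        _ = ‖E1 - E2 - E3 + E4‖ := by
            rw [expand, norm_mul, norm_pow, norm_neg, norm_one, one_pow, one_mul]
        _ ≤ ‖E1‖ + ‖E2‖ + ‖E3‖ + ‖E4‖ := by
            calc ‖E1 - E2 - E3 + E4‖ ≤ ‖E1 - E2 - E3‖ + ‖E4‖ := norm_add_le _ _
              _ ≤ ‖E1 - E2‖ + ‖E3‖ + ‖E4‖ := by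
                  have h := norm_sub_le (E1 - E2) E3
                  linarith
              _ ≤ ‖E1‖ + ‖E2‖ + ‖E3‖ + ‖E4‖ := by
                  have h := norm_sub_le E1 E2
                  linarith
        _ ≤ 4 * eps1 := by linarith
    calc Nrm f (q - q') ≤ Real.sqrt (4 * eps1) := Nrm_le_of _ _ hre
      _ = 2 * Real.sqrt eps1 := sqrt4
  have hqb : Nrm f q ≤ Mb := by
    obtain ⟨E, hE, hEn⟩ := keyB (L2.map (fun t => -t)) (L2.map (fun t => -t))
      (by rw [List.length_map]; exact hL2) (by rw [List.length_map]; exact hL2)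
      (neg_entries hL2e) (neg_entries hL2e)
    have hre : (B f q q).re ≤ ‖d (2 * b) 0‖ + 1 := by
      calc (B f q q).re ≤ ‖B f q q‖ := Complex.re_le_norm _
        _ = ‖d (2 * b) 0 + E‖ := by
            rw [hq_def, hE, norm_mul, norm_pow, norm_neg, norm_one, one_pow, one_mul]
        _ ≤ ‖d (2 * b) 0‖ + ‖E‖ := norm_add_le _ _
        _ ≤ ‖d (2 * b) 0‖ + 1 := by linarith
    exact Nrm_le_of _ _ hre
  have hp'a : Nrm f p' ≤ Ma := by
    obtain ⟨E, hE, hEn⟩ := keyA L1' L1' hL1' hL1' hL1'e hL1'e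
    have hre : (B f p' p').re ≤ ‖d (2 * a) 0‖ + 1 := by
      calc (B f p' p').re ≤ ‖B f p' p'‖ := Complex.re_le_norm _
        _ = ‖d (2 * a) 0 + E‖ := by
            rw [hp'_def, hE, norm_mul, norm_pow, norm_neg, norm_one, one_pow, one_mul]
        _ ≤ ‖d (2 * a) 0‖ + ‖E‖ := norm_add_le _ _
        _ ≤ ‖d (2 * a) 0‖ + 1 := by linarith
    exact Nrm_le_of _ _ hre
  have hmain : ‖iq L f x - iq L' f x‖
      ≤ Nrm f (p - p') * Nrm f q + Nrm f p' * Nrm f (q - q') := by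
    rw [hiq, hiq', ← mul_sub, norm_mul, norm_pow, norm_neg, norm_one, one_pow, one_mul]
    have hdecomp : B f (tau x p) q - B f (tau x p') q'
        = B f (tau x (p - p')) q + B f (tau x p') (q - q') := by
      rw [tau_sub, B_sub_left, B_sub_right]
      ring
    rw [hdecomp]
    calc ‖B f (tau x (p - p')) q + B f (tau x p') (q - q')‖
        ≤ ‖B f (tau x (p - p')) q‖ + ‖B f (tau x p') (q - q')‖ := norm_add_le _ _
      _ ≤ Nrm f (tau x (p - p')) * Nrm f q + Nrm f (tau x p') * Nrm f (q - q') :=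
          add_le_add (norm_B_le hpd _ _) (norm_B_le hpd _ _)
      _ = Nrm f (p - p') * Nrm f q + Nrm f p' * Nrm f (q - q') := by
          rw [Nrm_tau, Nrm_tau]
  have hsqrt : Real.sqrt eps1 ≤ ε / (2 * (Ma + Mb + 1)) := by
    have h1 : eps1 ≤ (ε / (2 * (Ma + Mb + 1))) ^ 2 := min_le_right _ _
    calc Real.sqrt eps1 ≤ Real.sqrt ((ε / (2 * (Ma + Mb + 1))) ^ 2) := Real.sqrt_le_sqrt h1
      _ = ε / (2 * (Ma + Mb + 1)) := Real.sqrt_sq (by positivity)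
  have hs0 : 0 ≤ Real.sqrt eps1 := Real.sqrt_nonneg _
  have hNd1 : 0 ≤ Nrm f (p - p') := Nrm_nonneg _
  have hNd2 : 0 ≤ Nrm f (q - q') := Nrm_nonneg _
  have hNq : 0 ≤ Nrm f q := Nrm_nonneg _
  have hNp' : 0 ≤ Nrm f p' := Nrm_nonneg _
  calc ‖iq L f x - iq L' f x‖
      ≤ Nrm f (p - p') * Nrm f q + Nrm f p' * Nrm f (q - q') := hmain
    _ ≤ (2 * Real.sqrt eps1) * Mb + Ma * (2 * Real.sqrt eps1) := by
        apply add_le_add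
        · exact mul_le_mul hdiffA hqb hNq (by positivity)
        · exact mul_le_mul hp'a hdiffB hNd2 hMa0
    _ = 2 * Real.sqrt eps1 * (Ma + Mb) := by ring
    _ ≤ 2 * (ε / (2 * (Ma + Mb + 1))) * (Ma + Mb) := by
        apply mul_le_mul_of_nonneg_right _ (by positivity)
        linarith
    _ ≤ ε := by
        have h2 : (0 : ℝ) < Ma + Mb + 1 := by linarith
        rw [show 2 * (ε / (2 * (Ma + Mb + 1))) * (Ma + Mb)
            = ε * ((Ma + Mb) / (Ma + Mb + 1)) from by field_simp]
        have h3 : (Ma + Mb) / (Ma + Mb + 1) ≤ 1 := by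
          rw [div_le_one h2]
          linarith
        nlinarith


omit hpd in
lemma f_cont' {k : ℕ} {U : Set ℝ} (hU : IsOpen U) (h0 : (0 : ℝ) ∈ U)
    (hf : ContDiffOn ℝ (2 * k : ℕ) f U)
    (hpd' : ∀ (n : ℕ) (x : Fin n → ℝ) (ξ : Fin n → ℂ),
      0 ≤ ∑ k, ∑ l, f (x k - x l) * ξ k * (starRingEnd ℂ) (ξ l)) :
    Continuous f := by
  have hc0 : ContinuousAt f 0 :=
    ((hf.continuousOn).continuousWithinAt h0).continuousAt (hU.mem_nhds h0)
  set C0 := Nrm f (dlt 0) with hC0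
  have hC00 : 0 ≤ C0 := Nrm_nonneg _
  rw [Metric.continuous_iff]
  intro x ε hε
  set ε' := (ε / (C0 + 1)) ^ 2 / 2 with hε'_def
  have hε'0 : 0 < ε' := by positivity
  obtain ⟨δ, hδ0, hδ⟩ := Metric.continuousAt_iff.1 hc0 ε' hε'0
  refine ⟨δ, hδ0, ?_⟩
  intro y hy
  set h := y - x with hh
  have hkey : f y - f x = B f (tau x (tau h (dlt 0) - dlt 0)) (dlt 0) := by
    rw [tau_sub, B_sub_left, tau_tau, Phi_dlt, Phi_dlt, show x + h = y from by rw [hh]; ring]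
  have hBsub : (B f (tau h (dlt 0) - dlt 0) (tau h (dlt 0) - dlt 0)).re
      = 2 * (f 0).re - 2 * (f h).re := by
    have e1 : tau h (dlt 0) = Finsupp.single h 1 := by
      unfold dlt; rw [tau_single, add_zero]
    rw [B_sub_left, B_sub_right, B_sub_right, e1]
    unfold dlt
    rw [B_single_single, B_single_single, B_single_single, B_single_single]
    have hsymm := f_symm hpd' h
    simp only [sub_self, sub_zero, zero_sub, map_one, mul_one]
    rw [hsymm]
    simp [Complex.sub_re, Complex.add_re, Complex.conj_re]
    ring
  have hclose : dist (f h) (f 0) < ε' := by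
    apply hδ
    rw [Real.dist_eq, sub_zero, hh, ← Real.dist_eq]
    exact hy
  have hre : (B f (tau h (dlt 0) - dlt 0) (tau h (dlt 0) - dlt 0)).re ≤ 2 * ε' := by
    rw [hBsub]
    have h1 : (f 0).re - (f h).re ≤ ‖f 0 - f h‖ := by
      calc (f 0).re - (f h).re = (f 0 - f h).re := by rw [Complex.sub_re]
        _ ≤ ‖f 0 - f h‖ := Complex.re_le_norm _
    have h2 : ‖f 0 - f h‖ < ε' := by
      rw [← dist_eq_norm, dist_comm]
      exact hclose
    linarith
  have hN : Nrm f (tau h (dlt 0) - dlt 0) ≤ ε / (C0 + 1) := by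
    calc Nrm f (tau h (dlt 0) - dlt 0) ≤ Real.sqrt (2 * ε') := Nrm_le_of _ _ hre
      _ = ε / (C0 + 1) := by
          rw [hε'_def, show 2 * ((ε / (C0 + 1)) ^ 2 / 2) = (ε / (C0 + 1)) ^ 2 from by ring,
            Real.sqrt_sq (by positivity)]
  rw [dist_eq_norm, hkey]
  calc ‖B f (tau x (tau h (dlt 0) - dlt 0)) (dlt 0)‖
      ≤ Nrm f (tau x (tau h (dlt 0) - dlt 0)) * C0 := norm_B_le hpd' _ _
    _ = Nrm f (tau h (dlt 0) - dlt 0) * C0 := by rw [Nrm_tau]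
    _ ≤ (ε / (C0 + 1)) * C0 := mul_le_mul_of_nonneg_right hN hC00
    _ < ε := by
        rw [div_mul_eq_mul_div, div_lt_iff₀ (by linarith)]
        nlinarith

omit hpd in
lemma replicate_entries {δ : ℝ} (hδ0 : 0 < δ) {N : ℕ} (hN : 1 / δ < (N : ℝ)) {m : ℕ} :
    ∀ j : ℕ, N ≤ j → ∀ t ∈ List.replicate m (1 / ((j : ℝ) + 1)), t ≠ 0 ∧ |t| ≤ δ := by
  intro j hj t ht
  rw [List.eq_of_mem_replicate ht]
  have hj1 : (0 : ℝ) < (j : ℝ) + 1 := by positivity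
  have hNj : (N : ℝ) ≤ (j : ℝ) + 1 := by
    have : (N : ℝ) ≤ (j : ℝ) := Nat.cast_le.2 hj
    linarith
  have hN' : 1 < δ * (N : ℝ) := by
    rw [div_lt_iff₀ hδ0] at hN
    linarith [hN]
  constructor
  · exact one_div_ne_zero (ne_of_gt hj1)
  · rw [abs_of_pos (by positivity), div_le_iff₀ hj1]
    nlinarith

lemma glim {k : ℕ} {U : Set ℝ} (hU : IsOpen U) (h0 : (0 : ℝ) ∈ U)
    (hf : ContDiffOn ℝ (2 * k : ℕ) f U) {m : ℕ} (hm : m ≤ 2 * k) :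
    ∃ G : ℝ → ℂ, Continuous G ∧ ∀ ε > 0, ∃ δ > 0, ∀ L : List ℝ, L.length = m →
      (∀ t ∈ L, t ≠ 0 ∧ |t| ≤ δ) → ∀ x : ℝ, ‖iq L f x - G x‖ ≤ ε := by
  have hfc : Continuous f := f_cont' hU h0 hf hpd
  set u : ℕ → ℝ → ℂ := fun j => iq (List.replicate m (1 / ((j : ℝ) + 1))) f with hu_def
  have hu_cont : ∀ j, Continuous (u j) := fun j => iq_continuous _ _ hfc
  have hcau : ∀ ε > 0, ∃ N : ℕ, ∀ i j, N ≤ i → N ≤ j → ∀ x, ‖u i x - u j x‖ ≤ ε := by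
    intro ε hε
    obtain ⟨δ, hδ0, hδ⟩ := cau hpd hU h0 hf hm ε hε
    obtain ⟨N, hN⟩ := exists_nat_gt (1 / δ)
    refine ⟨N, fun i j hi hj x => ?_⟩
    exact hδ _ _ (List.length_replicate) (List.length_replicate)
      (replicate_entries hδ0 hN i hi) (replicate_entries hδ0 hN j hj) x
  have hcs : ∀ x, CauchySeq (fun j => u j x) := by
    intro x
    rw [Metric.cauchySeq_iff]
    intro ε hε
    obtain ⟨N, hN⟩ := hcau (ε / 2) (by linarith)
    refine ⟨N, fun a ha b hb => ?_⟩
    rw [dist_eq_norm]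
    calc ‖u a x - u b x‖ ≤ ε / 2 := hN a b ha hb x
      _ < ε := by linarith
  choose G hG using fun x => cauchySeq_tendsto_of_complete (hcs x)
  have hunif : ∀ ε > 0, ∃ N, ∀ j, N ≤ j → ∀ x, ‖u j x - G x‖ ≤ ε := by
    intro ε hε
    obtain ⟨N, hN⟩ := hcau ε hε
    refine ⟨N, fun j hj x => ?_⟩
    have htd : Filter.Tendsto (fun i => ‖u j x - u i x‖) Filter.atTop (𝓝 ‖u j x - G x‖) :=
      (Filter.Tendsto.sub tendsto_const_nhds (hG x)).norm
    apply le_of_tendsto htd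
    filter_upwards [Filter.eventually_ge_atTop N] with i hi
    exact hN j i hj hi x
  have hTU : TendstoUniformly u G Filter.atTop := by
    rw [Metric.tendstoUniformly_iff]
    intro ε hε
    obtain ⟨N, hN⟩ := hunif (ε / 2) (by linarith)
    filter_upwards [Filter.eventually_ge_atTop N] with j hj x
    rw [dist_eq_norm, norm_sub_rev]
    calc ‖u j x - G x‖ ≤ ε / 2 := hN j hj x
      _ < ε := by linarith
  refine ⟨G, hTU.continuous (Filter.Eventually.of_forall hu_cont).frequently, ?_⟩
  intro ε hε
  obtain ⟨δ, hδ0, hδ⟩ := cau hpd hU h0 hf hm ε hε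
  refine ⟨δ, hδ0, ?_⟩
  intro L hL hLe x
  have hlim : Filter.Tendsto (fun j => ‖iq L f x - u j x‖) Filter.atTop
      (𝓝 ‖iq L f x - G x‖) :=
    (Filter.Tendsto.sub tendsto_const_nhds (hG x)).norm
  apply le_of_tendsto hlim
  obtain ⟨N, hN⟩ := exists_nat_gt (1 / δ)
  filter_upwards [Filter.eventually_ge_atTop N] with j hj
  exact hδ L _ hL (List.length_replicate) hLe (replicate_entries hδ0 hN j hj) x

omit hpd in
lemma deriv_link {m : ℕ} (G G' : ℝ → ℂ)
    (hG : ∀ ε > 0, ∃ δ > 0, ∀ L : List ℝ, L.length = m →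
      (∀ t ∈ L, t ≠ 0 ∧ |t| ≤ δ) → ∀ y : ℝ, ‖iq L f y - G y‖ ≤ ε)
    (hG' : ∀ ε > 0, ∃ δ > 0, ∀ L : List ℝ, L.length = m + 1 →
      (∀ t ∈ L, t ≠ 0 ∧ |t| ≤ δ) → ∀ y : ℝ, ‖iq L f y - G' y‖ ≤ ε)
    (x : ℝ) : HasDerivAt G (G' x) x := by
  have hpt : ∀ z : ℝ, Filter.Tendsto
      (fun j : ℕ => iq (List.replicate m (1 / ((j : ℝ) + 1))) f z) Filter.atTop (𝓝 (G z)) := by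
    intro z
    rw [Metric.tendsto_atTop]
    intro ε hε
    obtain ⟨δ, hδ0, hδ⟩ := hG (ε / 2) (by linarith)
    obtain ⟨N, hN⟩ := exists_nat_gt (1 / δ)
    refine ⟨N, fun j hj => ?_⟩
    rw [dist_eq_norm]
    calc ‖iq (List.replicate m (1 / ((j : ℝ) + 1))) f z - G z‖ ≤ ε / 2 :=
        hδ _ (List.length_replicate) (replicate_entries hδ0 hN j hj) z
      _ < ε := by linarith
  rw [hasDerivAt_iff_tendsto_slope, Metric.tendsto_nhdsWithin_nhds]
  intro ε hε
  obtain ⟨δ, hδ0, hδ⟩ := hG' (ε / 2) (by linarith)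
  refine ⟨δ, hδ0, ?_⟩
  intro y hy hyx
  set h := y - x with hh
  have hyne : y ≠ x := hy
  have hne : h ≠ 0 := sub_ne_zero.2 hyne
  have hhδ : |h| ≤ δ := by
    rw [Real.dist_eq] at hyx
    rw [hh]
    exact le_of_lt hyx
  have hslope : slope G x y = (G y - G x) / ((h : ℝ) : ℂ) := by
    rw [slope, ← hh, vsub_eq_sub, Complex.real_smul, Complex.ofReal_inv, inv_mul_eq_div]
  have hform : ∀ j : ℕ, iq (h :: List.replicate m (1 / ((j : ℝ) + 1))) f x
      = (iq (List.replicate m (1 / ((j : ℝ) + 1))) f y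
          - iq (List.replicate m (1 / ((j : ℝ) + 1))) f x) / ((h : ℝ) : ℂ) := by
    intro j
    rw [iq_cons]
    unfold Dq
    rw [show x + h = y from by rw [hh]; ring]
  have hlim : Filter.Tendsto (fun j : ℕ => iq (h :: List.replicate m (1 / ((j : ℝ) + 1))) f x)
      Filter.atTop (𝓝 (slope G x y)) := by
    rw [hslope]
    have := (Filter.Tendsto.sub (hpt y) (hpt x)).div_const ((h : ℝ) : ℂ)
    apply this.congr
    intro j
    exact (hform j).symm
  have hev : ∀ᶠ j : ℕ in Filter.atTop,
      ‖iq (h :: List.replicate m (1 / ((j : ℝ) + 1))) f x - G' x‖ ≤ ε / 2 := by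
    obtain ⟨N, hN⟩ := exists_nat_gt (1 / δ)
    filter_upwards [Filter.eventually_ge_atTop N] with j hj
    apply hδ _ (by rw [List.length_cons, List.length_replicate])
    · intro t ht
      rcases List.mem_cons.1 ht with rfl | ht'
      · exact ⟨hne, hhδ⟩
      · exact replicate_entries hδ0 hN j hj t ht'
  have hfin : ‖slope G x y - G' x‖ ≤ ε / 2 := by
    have htd : Filter.Tendsto
        (fun j : ℕ => ‖iq (h :: List.replicate m (1 / ((j : ℝ) + 1))) f x - G' x‖)
        Filter.atTop (𝓝 ‖slope G x y - G' x‖) :=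
      (Filter.Tendsto.sub hlim tendsto_const_nhds).norm
    exact le_of_tendsto htd hev
  rw [dist_eq_norm]
  calc ‖slope G x y - G' x‖ ≤ ε / 2 := hfin
    _ < ε := by linarith

omit hpd in
lemma chain_contDiff : ∀ (n : ℕ) (g : ℕ → ℝ → ℂ),
    (∀ j < n, ∀ x : ℝ, HasDerivAt (g j) (g (j + 1) x) x) → Continuous (g n) →
    ContDiff ℝ (n : ℕ) (g 0) := by
  intro n
  induction n with
  | zero => exact fun g _ hc => contDiff_zero.2 hc
  | succ n ih =>
    intro g hd hc
    have hdiff : Differentiable ℝ (g 0) := fun x => (hd 0 (by omega) x).differentiableAt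
    have hderiv : deriv (g 0) = g 1 := funext fun x => (hd 0 (by omega) x).deriv
    have hg1 : ContDiff ℝ (n : ℕ) (g 1) :=
      ih (fun j => g (j + 1)) (fun j hj x => hd (j + 1) (by omega) x) hc
    have hcast : ((n + 1 : ℕ) : WithTop ℕ∞) = (n : WithTop ℕ∞) + 1 := by
      push_cast
      rfl
    rw [hcast]
    refine contDiff_succ_iff_deriv.2 ⟨hdiff, ?_, ?_⟩
    · intro hω
      exact absurd hω (by simp)
    · rw [hderiv]
      exact hg1

end PDW

/-- If a positive definite function `f : ℝ → ℂ` is `C^{2k}` on an open neighborhood of the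
origin, then it is `C^{2k}` on all of `ℝ`. -/

theorem stmt0 (f : ℝ → ℂ) (hpd : IsPosDefFun f) (k : ℕ)
    (U : Set ℝ) (hU : IsOpen U) (h0 : (0 : ℝ) ∈ U)
    (hf : ContDiffOn ℝ (2 * k : ℕ) f U) :
    ContDiff ℝ (2 * k : ℕ) f := by
  have hpd' : ∀ (n : ℕ) (x : Fin n → ℝ) (ξ : Fin n → ℂ),
      0 ≤ ∑ k, ∑ l, f (x k - x l) * ξ k * (starRingEnd ℂ) (ξ l) := hpd
  have H : ∀ m, m ≤ 2 * k → ∃ G : ℝ → ℂ, Continuous G ∧ ∀ ε > 0, ∃ δ > 0,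
      ∀ L : List ℝ, L.length = m → (∀ t ∈ L, t ≠ 0 ∧ |t| ≤ δ) → ∀ x : ℝ,
      ‖PDW.iq L f x - G x‖ ≤ ε := fun m hm => PDW.glim hpd' hU h0 hf hm
  choose! G hGc hGe using H
  have hG0 : G 0 = f := by
    funext x
    have key : ∀ ε > 0, ‖f x - G 0 x‖ ≤ ε := by
      intro ε hε
      obtain ⟨δ, hδ0, hδ⟩ := hGe 0 (by omega) ε hε
      simpa [PDW.iq] using hδ [] rfl (by simp) x
    have hz : ‖f x - G 0 x‖ ≤ 0 := by
      by_contra hcon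
      push_neg at hcon
      have h2 := key (‖f x - G 0 x‖ / 2) (by linarith)
      linarith
    have h3 : f x - G 0 x = 0 := norm_le_zero_iff.1 hz
    have h4 : f x = G 0 x := sub_eq_zero.1 h3
    exact h4.symm
  have hchain : ∀ j < 2 * k, ∀ x : ℝ, HasDerivAt (G j) (G (j + 1) x) x := fun j hj x =>
    PDW.deriv_link (G j) (G (j + 1)) (hGe j (by omega)) (hGe (j + 1) (by omega)) x
  have hcd := PDW.chain_contDiff (2 * k) G hchain (hGc (2 * k) le_rfl)
  rwa [hG0] at hcd
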